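/- In the setting of the preceding duality (σ-finite W, Q with η(1) < ∞), for every ε ≥ 0 one has the spectral representation β(ε) = ∫_0^∞ max(W({dQ̃/dW > t}) − ε, 0) dt, where Q̃ is the W-absolutely-continuous component of Q. -/

import Mathlib

open MeasureTheory Set ENNReal

variable {Ω : Type*} [MeasurableSpace Ω]

/-- `β(ε)`: the minimal Type II error over randomized tests `T : Ω → [0,1]` with
Type I error `∫ T dW ≤ ε`. -/
noncomputable def betaNP (Q W : Measure Ω) (ε : ℝ) : ℝ≥0∞ :=
  ⨅ (T : Ω → ℝ) (_ : Measurable T) (_ : ∀ x, T x ∈ Set.Icc (0 : ℝ) 1)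
    (_ : ∫⁻ x, ENNReal.ofReal (T x) ∂W ≤ ENNReal.ofReal ε),
    ∫⁻ x, ENNReal.ofReal (1 - T x) ∂Q


lemma pt_layer (c : ℝ≥0∞) : (volume.restrict (Ioi (0:ℝ))) {t | ENNReal.ofReal t < c} = c := by
  rcases eq_or_ne c ⊤ with rfl | hc
  · rw [Measure.restrict_apply (measurableSet_lt ENNReal.measurable_ofReal measurable_const)]
    have : {t : ℝ | ENNReal.ofReal t < ⊤} = univ := eq_univ_of_forall fun t => ofReal_lt_top
    rw [this, univ_inter]
    simp
  · rw [Measure.restrict_apply (measurableSet_lt ENNReal.measurable_ofReal measurable_const)]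
    have : {t : ℝ | ENNReal.ofReal t < c} ∩ Ioi 0 = Ioo 0 c.toReal := by
      ext t
      simp only [mem_inter_iff, mem_setOf_eq, mem_Ioi, mem_Ioo]
      constructor
      · rintro ⟨h1, h2⟩
        exact ⟨h2, (ENNReal.ofReal_lt_iff_lt_toReal h2.le hc).mp h1⟩
      · rintro ⟨h1, h2⟩
        exact ⟨(ENNReal.ofReal_lt_iff_lt_toReal h1.le hc).mpr h2, h1⟩
    rw [this, Real.volume_Ioo, sub_zero, ENNReal.ofReal_toReal hc]

lemma layer_mul (W : Measure Ω) [SigmaFinite W] {h φ : Ω → ℝ≥0∞}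
    (hh : Measurable h) (hφ : Measurable φ) :
    ∫⁻ x, h x * φ x ∂W
      = ∫⁻ t in Ioi (0:ℝ), ∫⁻ x in {x | ENNReal.ofReal t < φ x}, h x ∂W := by
  set F : Ω → ℝ → ℝ≥0∞ := fun x t => h x * ({p : Ω × ℝ | ENNReal.ofReal p.2 < φ p.1}.indicator (fun _ => (1:ℝ≥0∞)) (x, t)) with hF
  have hmeas : Measurable (Function.uncurry F) := by
    have : Function.uncurry F = fun p : Ω × ℝ => h p.1 * ({p : Ω × ℝ | ENNReal.ofReal p.2 < φ p.1}.indicator (fun _ => (1:ℝ≥0∞)) p) := rfl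
    rw [this]
    apply (hh.comp measurable_fst).mul
    apply Measurable.indicator measurable_const
    exact measurableSet_lt (ENNReal.measurable_ofReal.comp measurable_snd) (hφ.comp measurable_fst)
  have swap := lintegral_lintegral_swap (μ := W) (ν := volume.restrict (Ioi (0:ℝ))) (f := F) hmeas.aemeasurable
  calc ∫⁻ x, h x * φ x ∂W
      = ∫⁻ x, ∫⁻ t in Ioi (0:ℝ), h x * ({p : Ω × ℝ | ENNReal.ofReal p.2 < φ p.1}.indicator (fun _ => (1:ℝ≥0∞)) (x, t)) ∂volume ∂W := by
        refine lintegral_congr fun x => ?_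
        rw [lintegral_const_mul]
        · congr 1
          have heq : ∀ t : ℝ, ({p : Ω × ℝ | ENNReal.ofReal p.2 < φ p.1}.indicator (fun _ => (1:ℝ≥0∞)) (x, t)) = ({t : ℝ | ENNReal.ofReal t < φ x}.indicator (fun _ => (1:ℝ≥0∞)) t) := by
            intro t
            simp only [Set.indicator_apply, mem_setOf_eq]
          rw [lintegral_congr heq,
            lintegral_indicator (measurableSet_lt ENNReal.measurable_ofReal measurable_const),
            setLIntegral_one]
          exact (pt_layer (φ x)).symm
        · apply Measurable.indicator measurable_const
          exact (measurableSet_lt (ENNReal.measurable_ofReal.comp measurable_snd) (hφ.comp measurable_fst)).preimage (measurable_prodMk_left)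
  _ = ∫⁻ t in Ioi (0:ℝ), ∫⁻ x, h x * ({p : Ω × ℝ | ENNReal.ofReal p.2 < φ p.1}.indicator (fun _ => (1:ℝ≥0∞)) (x, t)) ∂W ∂volume := swap
  _ = ∫⁻ t in Ioi (0:ℝ), ∫⁻ x in {x | ENNReal.ofReal t < φ x}, h x ∂W ∂volume := by
        refine lintegral_congr fun t => ?_
        rw [← lintegral_indicator (measurableSet_lt measurable_const hφ)]
        refine lintegral_congr fun x => ?_
        simp only [Set.indicator_apply, mem_setOf_eq]
        by_cases hx : ENNReal.ofReal t < φ x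
        · simp [hx]
        · simp [hx]

lemma layer (W : Measure Ω) [SigmaFinite W] {φ : Ω → ℝ≥0∞} (hφ : Measurable φ) :
    ∫⁻ x, φ x ∂W = ∫⁻ t in Ioi (0:ℝ), W {x | ENNReal.ofReal t < φ x} := by
  have := layer_mul W measurable_const hφ (h := fun _ => 1)
  simpa using this

lemma betaNP_ge (Q W : Measure Ω) [SigmaFinite W] [SigmaFinite Q] (ε : ℝ) :
    ∫⁻ t in Ioi (0:ℝ), (W {x | ENNReal.ofReal t < Q.rnDeriv W x} - ENNReal.ofReal ε)
      ≤ betaNP Q W ε := by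
  set f := Q.rnDeriv W with hfdef
  have hf : Measurable f := Measure.measurable_rnDeriv _ _
  refine le_iInf fun T => le_iInf fun hTm => le_iInf fun hT01 => le_iInf fun hTε => ?_
  set h : Ω → ℝ≥0∞ := fun x => ENNReal.ofReal (1 - T x) with hh
  have hhm : Measurable h := ENNReal.measurable_ofReal.comp (measurable_const.sub hTm)
  calc ∫⁻ t in Ioi (0:ℝ), (W {x | ENNReal.ofReal t < f x} - ENNReal.ofReal ε)
      ≤ ∫⁻ t in Ioi (0:ℝ), ∫⁻ x in {x | ENNReal.ofReal t < f x}, h x ∂W := by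
        refine lintegral_mono fun t => ?_
        rw [tsub_le_iff_right]
        have hpt : ∀ x, h x + ENNReal.ofReal (T x) = 1 := by
          intro x
          rw [hh]
          dsimp only
          rw [← ENNReal.ofReal_add (by linarith [(hT01 x).2]) ((hT01 x).1)]
          norm_num
        have : W {x | ENNReal.ofReal t < f x}
            = ∫⁻ x in {x | ENNReal.ofReal t < f x}, (h x + ENNReal.ofReal (T x)) ∂W := by
          simp_rw [hpt]
          rw [setLIntegral_one]
        rw [this, lintegral_add_left hhm]
        gcongr
        calc ∫⁻ x in {x | ENNReal.ofReal t < f x}, ENNReal.ofReal (T x) ∂W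
            ≤ ∫⁻ x, ENNReal.ofReal (T x) ∂W := setLIntegral_le_lintegral _ _
          _ ≤ ENNReal.ofReal ε := hTε
  _ = ∫⁻ x, h x * f x ∂W := (layer_mul W hhm hf).symm
  _ = ∫⁻ x, h x ∂(W.withDensity f) := by
        rw [lintegral_withDensity_eq_lintegral_mul W hf hhm]
        exact lintegral_congr fun x => mul_comm (h x) (f x)
  _ ≤ ∫⁻ x, h x ∂Q := lintegral_mono' (Measure.withDensity_rnDeriv_le Q W) le_rfl

lemma betaNP_le_test (Q W : Measure Ω) [SigmaFinite W] [SigmaFinite Q] (ε : ℝ)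
    {S : Set Ω} (hSm : MeasurableSet S) (hWS : W S = 0) (hsing : Q.singularPart W Sᶜ = 0)
    (c : ℝ≥0∞) (γ : ℝ) (hγ0 : 0 ≤ γ) (hγ1 : γ ≤ 1)
    (hI : W {x | c < Q.rnDeriv W x} + ENNReal.ofReal γ * W {x | Q.rnDeriv W x = c}
        ≤ ENNReal.ofReal ε) :
    betaNP Q W ε ≤ ∫⁻ x in {x | Q.rnDeriv W x < c}, Q.rnDeriv W x ∂W
      + (1 - ENNReal.ofReal γ) * (c * W {x | Q.rnDeriv W x = c}) := by
  classical
  set f := Q.rnDeriv W with hfdef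
  have hf : Measurable f := Measure.measurable_rnDeriv _ _
  set A := {x | c < f x} with hA
  set B := {x | f x = c} with hB
  set C := {x | f x < c} with hC
  have hAm : MeasurableSet A := measurableSet_lt measurable_const hf
  have hBm : MeasurableSet B := hf (measurableSet_singleton c)
  have hCm : MeasurableSet C := measurableSet_lt hf measurable_const
  set T : Ω → ℝ := fun x => if c < f x ∨ x ∈ S then 1 else if f x = c then γ else 0 with hT
  have hTm : Measurable T := by
    apply Measurable.ite (hAm.union hSm) measurable_const
    exact Measurable.ite hBm measurable_const measurable_const
  have hT01 : ∀ x, T x ∈ Set.Icc (0:ℝ) 1 := by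
    intro x
    rw [hT]
    dsimp only
    split_ifs <;> constructor <;> norm_num [hγ0, hγ1]
  have haeS : ∀ᵐ x ∂W, x ∉ S := by
    rw [ae_iff]
    have : {x | ¬ x ∉ S} = S := by ext x; simp
    rw [this]
    exact hWS
  have hTI : ∫⁻ x, ENNReal.ofReal (T x) ∂W ≤ ENNReal.ofReal ε := by
    have heq : ∫⁻ x, ENNReal.ofReal (T x) ∂W
        = ∫⁻ x, (A.indicator (fun _ => (1:ℝ≥0∞)) x
            + B.indicator (fun _ => ENNReal.ofReal γ) x) ∂W := by
      apply lintegral_congr_ae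
      filter_upwards [haeS] with x hx
      by_cases h1 : c < f x
      · have h2 : f x ≠ c := ne_of_gt h1
        simp [hT, hA, hB, h1, h2, Set.indicator_apply]
      · by_cases h2 : f x = c
        · simp [hT, hA, hB, h1, h2, hx, Set.indicator_apply]
        · simp [hT, hA, hB, h1, h2, hx, Set.indicator_apply]
    rw [heq, lintegral_add_left (measurable_const.indicator hAm),
      lintegral_indicator hAm, lintegral_indicator hBm, setLIntegral_one, setLIntegral_const]
    exact hI
  have hhm : Measurable fun x => ENNReal.ofReal (1 - T x) :=
    ENNReal.measurable_ofReal.comp (measurable_const.sub hTm)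
  have key : ∫⁻ x, ENNReal.ofReal (1 - T x) ∂Q
      = ∫⁻ x in C, f x ∂W + (1 - ENNReal.ofReal γ) * (c * W B) := by
    conv_lhs => rw [← Measure.singularPart_add_rnDeriv Q W]
    rw [lintegral_add_measure]
    have hsing0 : ∫⁻ x, ENNReal.ofReal (1 - T x) ∂(Q.singularPart W) = 0 := by
      have haeSc : ∀ᵐ x ∂(Q.singularPart W), x ∈ S := by
        rw [ae_iff]
        have : {x | ¬ x ∈ S} = Sᶜ := rfl
        rw [this]
        exact hsing
      rw [← lintegral_zero (μ := Q.singularPart W)]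
      apply lintegral_congr_ae
      filter_upwards [haeSc] with x hx
      have : T x = 1 := by rw [hT]; simp [hx]
      simp [this]
    rw [hsing0, zero_add, lintegral_withDensity_eq_lintegral_mul W hf hhm]
    have heq2 : ∫⁻ x, (f * fun x => ENNReal.ofReal (1 - T x)) x ∂W
        = ∫⁻ x, (C.indicator f x
            + B.indicator (fun _ => (1 - ENNReal.ofReal γ) * c) x) ∂W := by
      apply lintegral_congr_ae
      filter_upwards [haeS] with x hx
      simp only [Pi.mul_apply]
      rcases lt_trichotomy (f x) c with h1 | h1 | h1
      · have hne : ¬ c < f x := not_lt.mpr h1.le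
        have hne2 : f x ≠ c := ne_of_lt h1
        simp [hT, hA, hB, hC, hne, hne2, hx, h1, Set.indicator_apply]
      · have hne : ¬ c < f x := not_lt.mpr h1.le
        have hlt : ¬ f x < c := not_lt.mpr h1.ge
        have : ENNReal.ofReal (1 - γ) = 1 - ENNReal.ofReal γ := by
          rw [ENNReal.ofReal_sub _ hγ0, ENNReal.ofReal_one]
        simp [hT, hA, hB, hC, hne, hlt, hx, h1, Set.indicator_apply, this, mul_comm]
      · have hne : ¬ f x < c := not_lt.mpr h1.le
        have hne2 : f x ≠ c := ne_of_gt h1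
        simp [hT, hA, hB, hC, hne, hne2, hx, h1, Set.indicator_apply]
    rw [heq2, lintegral_add_left (hf.indicator hCm), lintegral_indicator hCm,
      lintegral_indicator hBm, setLIntegral_const, mul_assoc]
  calc betaNP Q W ε ≤ ∫⁻ x, ENNReal.ofReal (1 - T x) ∂Q :=
        iInf_le_of_le T (iInf_le_of_le hTm (iInf_le_of_le hT01 (iInf_le_of_le hTI le_rfl)))
  _ = _ := key

/-- Spectral representation of `β`: for σ-finite `W, Q` with `η(1) < ∞`, for every
`ε ≥ 0`, `β(ε) = ∫_0^∞ (W({dQ̃/dW > t}) − ε)₊ dt`, where `Q̃` is the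
`W`-absolutely-continuous component of `Q` (so `dQ̃/dW` is the Radon–Nikodym
derivative of `Q` with respect to `W`). -/
theorem betaNP_spectral_repr (Q W ρ : Measure Ω)
    [SigmaFinite W] [SigmaFinite Q] [SigmaFinite ρ]
    (hW : W ≪ ρ) (hQ : Q ≪ ρ)
    (h1 : ∫⁻ x, min (W.rnDeriv ρ x) (Q.rnDeriv ρ x) ∂ρ ≠ ⊤) :
    ∀ ε : ℝ, 0 ≤ ε →
      betaNP Q W ε
        = ∫⁻ t in Set.Ioi (0 : ℝ),
            (W {x | ENNReal.ofReal t < Q.rnDeriv W x} - ENNReal.ofReal ε) := by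
  intro ε hε
  set f := Q.rnDeriv W with hfdef
  have hf : Measurable f := Measure.measurable_rnDeriv _ _
  set ε' := ENNReal.ofReal ε with hε'def
  have hε't : ε' ≠ ⊤ := ofReal_ne_top
  set g : ℝ → ℝ≥0∞ := fun t => W {x | ENNReal.ofReal t < f x} with hgdef
  have hgoal : (∫⁻ t in Set.Ioi (0:ℝ), (W {x | ENNReal.ofReal t < f x} - ε'))
      = ∫⁻ t in Set.Ioi (0:ℝ), (g t - ε') := rfl
  refine le_antisymm ?_ (betaNP_ge Q W ε)
  rw [hgoal]
  by_cases hR : (∫⁻ t in Ioi (0:ℝ), (g t - ε')) = ⊤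
  · rw [hR]; exact le_top
  have gmono : Antitone g := fun s t hst =>
    measure_mono fun x hx => lt_of_le_of_lt (ofReal_le_ofReal hst) hx
  have hgfin : ∀ t : ℝ, 0 < t → g t ≠ ⊤ := by
    intro t ht htop
    apply hR
    rw [eq_top_iff]
    calc (⊤:ℝ≥0∞) = ∫⁻ _ in Ioo (0:ℝ) t, (⊤:ℝ≥0∞) := by
          rw [setLIntegral_const, Real.volume_Ioo, sub_zero,
            ENNReal.top_mul (ENNReal.ofReal_pos.mpr ht).ne']
      _ ≤ ∫⁻ s in Ioo (0:ℝ) t, (g s - ε') := by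
          refine setLIntegral_mono' measurableSet_Ioo fun s hs => ?_
          have hgs : g s = ⊤ := top_le_iff.mp (htop ▸ gmono hs.2.le)
          exact ENNReal.le_sub_of_add_le_right hε't (by rw [hgs]; exact le_top)
      _ ≤ ∫⁻ s in Ioi (0:ℝ), (g s - ε') :=
          lintegral_mono' (Measure.restrict_mono Ioo_subset_Ioi_self le_rfl) le_rfl
  obtain ⟨s₀, hs₀m, hsing0, hWs0⟩ := Measure.mutuallySingular_singularPart Q W
  set S := s₀ᶜ with hSdef
  have hSm : MeasurableSet S := hs₀m.compl
  have hWS : W S = 0 := hWs0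
  have hsingS : Q.singularPart W Sᶜ = 0 := by rw [hSdef, compl_compl]; exact hsing0
  by_cases hcase : ∀ t : ℝ, 0 < t → ε' < g t
  -- CASE 1 : g is everywhere above ε'
  · set m := W {x | f x = ⊤} with hmdef
    have hmle : ∀ t : ℝ, m ≤ g t := fun t => measure_mono fun x hx => by
      rw [mem_setOf_eq] at hx ⊢
      rw [hx]; exact ofReal_lt_top
    have hm_le_ε : m ≤ ε' := by
      by_contra hlt
      push_neg at hlt
      apply hR
      rw [eq_top_iff]
      calc (⊤:ℝ≥0∞) = ∫⁻ _ in Ioi (0:ℝ), (m - ε') := by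
            rw [setLIntegral_const, Real.volume_Ioi,
              ENNReal.mul_top (tsub_pos_of_lt hlt).ne']
        _ ≤ ∫⁻ t in Ioi (0:ℝ), (g t - ε') :=
            lintegral_mono fun t => tsub_le_tsub_right (hmle t) _
    have hε_le_m : ε' ≤ m := by
      have hiInter : (⋂ n : ℕ, {x | ENNReal.ofReal ((n:ℝ)+1) < f x}) = {x | f x = ⊤} := by
        ext x
        simp only [mem_iInter, mem_setOf_eq]
        constructor
        · intro h
          by_contra hne
          obtain ⟨n, hn⟩ := exists_nat_gt (f x).toReal
          exact absurd (h n) (not_lt.mpr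
            ((ENNReal.lt_ofReal_iff_toReal_lt hne).mpr (by linarith)).le)
        · intro h n; rw [h]; exact ofReal_lt_top
      have hmeq : m = ⨅ n : ℕ, W {x | ENNReal.ofReal ((n:ℝ)+1) < f x} := by
        rw [hmdef, ← hiInter]
        refine Directed.measure_iInter
          (fun n => (measurableSet_lt measurable_const hf).nullMeasurableSet) ?_ ⟨0, ?_⟩
        · intro i j
          refine ⟨max i j, fun x hx => ?_, fun x hx => ?_⟩ <;> rw [mem_setOf_eq] at hx ⊢ <;>
            refine lt_of_le_of_lt (ofReal_le_ofReal ?_) hx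
          · have h1 : (i:ℝ) ≤ ((max i j : ℕ):ℝ) := Nat.cast_le.mpr (le_max_left i j)
            linarith
          · have h1 : (j:ℝ) ≤ ((max i j : ℕ):ℝ) := Nat.cast_le.mpr (le_max_right i j)
            linarith
        · exact hgfin _ (by positivity)
      rw [hmeq]
      exact le_iInf fun n => (hcase _ (by positivity)).le
    have hseteq : ∀ t : ℝ, {x | ENNReal.ofReal t < ({x | f x < ⊤}.indicator f) x}
        = {x | ENNReal.ofReal t < f x} \ {x | f x = ⊤} := by
      intro t
      ext x
      by_cases hx : f x < ⊤
      · simp [Set.indicator_apply, hx, mem_diff, hx.ne]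
      · have hx' : f x = ⊤ := top_le_iff.mp (not_lt.mp hx)
        simp [Set.indicator_apply, hx, mem_diff, hx']
    have hcalc : ∫⁻ x in {x | f x < ⊤}, f x ∂W ≤ ∫⁻ t in Ioi (0:ℝ), (g t - ε') := by
      rw [← lintegral_indicator (measurableSet_lt hf measurable_const),
        layer W (hf.indicator (measurableSet_lt hf measurable_const))]
      refine lintegral_mono fun t => ?_
      have hsub_top : {x | f x = ⊤} ⊆ {x | ENNReal.ofReal t < f x} := fun x hx => by
        have hx' : f x = ⊤ := hx
        show ENNReal.ofReal t < f x
        rw [hx']; exact ofReal_lt_top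
      rw [hseteq t, measure_diff hsub_top
        (show NullMeasurableSet {x | f x = ⊤} W from
          (hf (measurableSet_singleton ⊤)).nullMeasurableSet)
        (ne_top_of_le_ne_top hε't hm_le_ε)]
      exact tsub_le_tsub_left hε_le_m _
    have htest := betaNP_le_test Q W ε hSm hWS hsingS ⊤ 1 zero_le_one le_rfl ?_
    · refine le_trans htest ?_
      have h1 : (1 - ENNReal.ofReal 1) = 0 := by simp
      rw [h1, zero_mul, add_zero]
      exact hcalc
    · have hempty : {x | (⊤:ℝ≥0∞) < f x} = ∅ :=
        eq_empty_of_forall_notMem fun x hx => not_top_lt (show (⊤:ℝ≥0∞) < f x from hx)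
      rw [hempty]
      simpa using hm_le_ε
  -- CASE 2 : there is t > 0 with g t ≤ ε'
  · push_neg at hcase
    obtain ⟨t₀, ht₀pos, ht₀⟩ := hcase
    set Aset : Set ℝ := {t | 0 < t ∧ g t ≤ ε'} with hAsetdef
    have hAne : Aset.Nonempty := ⟨t₀, ht₀pos, ht₀⟩
    have hbdd : BddBelow Aset := ⟨0, fun t ht => ht.1.le⟩
    set τ := sInf Aset with hτdef
    have hτ0 : 0 ≤ τ := le_csInf hAne fun t ht => ht.1.le
    have hτ_above : ∀ s, τ < s → g s ≤ ε' := by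
      intro s hs
      obtain ⟨t, htA, hts⟩ := exists_lt_of_csInf_lt hAne hs
      exact le_trans (gmono hts.le) htA.2
    have hgτ : g τ ≤ ε' := by
      have hUnion : {x | ENNReal.ofReal τ < f x}
          = ⋃ n : ℕ, {x | ENNReal.ofReal (τ + 1/((n:ℝ)+1)) < f x} := by
        ext x
        simp only [mem_iUnion, mem_setOf_eq]
        constructor
        · intro h
          rcases eq_or_ne (f x) ⊤ with htop | htop
          · exact ⟨0, by rw [htop]; exact ofReal_lt_top⟩
          · have h1 : τ < (f x).toReal := (ENNReal.ofReal_lt_iff_lt_toReal hτ0 htop).mp h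
            obtain ⟨n, hn⟩ := exists_nat_one_div_lt (sub_pos.mpr h1)
            refine ⟨n, ?_⟩
            have h9 : (0:ℝ) < 1/((n:ℝ)+1) := by positivity
            rw [ENNReal.ofReal_lt_iff_lt_toReal (by linarith) htop]
            linarith
        · rintro ⟨n, hn⟩
          refine lt_of_le_of_lt (ofReal_le_ofReal ?_) hn
          have h9 : (0:ℝ) < 1/((n:ℝ)+1) := by positivity
          linarith
      have hmono : Monotone fun n : ℕ => {x | ENNReal.ofReal (τ + 1/((n:ℝ)+1)) < f x} := by
        intro i j hij x hx
        rw [mem_setOf_eq] at hx ⊢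
        refine lt_of_le_of_lt (ofReal_le_ofReal ?_) hx
        have h1 : (i:ℝ) ≤ (j:ℝ) := Nat.cast_le.mpr hij
        have h2 : 1/((j:ℝ)+1) ≤ 1/((i:ℝ)+1) :=
          one_div_le_one_div_of_le (by positivity) (by linarith)
        linarith
      show W {x | ENNReal.ofReal τ < f x} ≤ ε'
      rw [hUnion, Monotone.measure_iUnion hmono]
      exact iSup_le fun n => hτ_above _ (lt_add_of_pos_right τ (by positivity))
    rcases eq_or_lt_of_le hτ0 with hτeq | hτpos
    -- τ = 0
    · have h0 : W {x | (0:ℝ≥0∞) < f x} ≤ ε' := by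
        have h2 := hgτ
        rw [← hτeq] at h2
        have hseteq0 : {x | (0:ℝ≥0∞) < f x} = {x | ENNReal.ofReal 0 < f x} := by
          simp [ENNReal.ofReal_zero]
        rw [hseteq0]
        exact h2
      have htest := betaNP_le_test Q W ε hSm hWS hsingS 0 0 le_rfl zero_le_one ?_
      · refine le_trans htest ?_
        have h1 : {x | f x < (0:ℝ≥0∞)} = ∅ :=
          eq_empty_of_forall_notMem fun x hx => not_lt_of_ge zero_le (show f x < (0:ℝ≥0∞) from hx)
        rw [h1]
        simp
      · simpa [ENNReal.ofReal_zero] using h0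
    -- τ > 0
    · have hdivle : ∀ x y : ℝ, 0 < x → x ≤ y → τ/y ≤ τ/x := by
        intro x y hx hxy
        rw [div_le_div_iff₀ (by linarith) hx]
        nlinarith
      set c := ENNReal.ofReal τ with hcdef
      set a := W {x | f x = c} with hadef
      set b := W {x | c ≤ f x} with hbdef
      have hgτc : g τ = W {x | c < f x} := rfl
      have hbsplit : b = g τ + a := by
        have hset : {x | c ≤ f x} = {x | c < f x} ∪ {x | f x = c} := by
          ext x
          simp only [mem_setOf_eq, mem_union]
          constructor
          · intro h
            rcases lt_or_eq_of_le h with h' | h'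
            · exact Or.inl h'
            · exact Or.inr h'.symm
          · rintro (h | h)
            · exact h.le
            · exact h.ge
        rw [hbdef, hset, measure_union ?_
          (show MeasurableSet {x | f x = c} from hf (measurableSet_singleton c))]
        exact Set.disjoint_left.mpr fun x hx1 hx2 => absurd hx2 (ne_of_gt hx1)
      have hsubset_cb : ∀ t : ℝ, t < τ → {x | c ≤ f x} ⊆ {x | ENNReal.ofReal t < f x} := by
        intro t ht x hx
        rw [mem_setOf_eq] at hx ⊢
        exact lt_of_lt_of_le ((ENNReal.ofReal_lt_ofReal_iff hτpos).mpr ht) hx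
      have hble : ∀ t : ℝ, t < τ → b ≤ g t := fun t ht => measure_mono (hsubset_cb t ht)
      have hbfin : b ≠ ⊤ :=
        ne_top_of_le_ne_top (hgfin (τ/2) (by positivity)) (hble (τ/2) (by linarith))
      have hafin : a ≠ ⊤ := ne_top_of_le_ne_top hbfin
        (measure_mono fun x hx => by rw [mem_setOf_eq] at hx ⊢; exact hx.ge)
      have hgτfin : g τ ≠ ⊤ := ne_top_of_le_ne_top hε't hgτ
      -- ε' ≤ b via continuity from above
      have hbinf : ε' ≤ b := by
        have hiInter : (⋂ n : ℕ, {x | ENNReal.ofReal (τ - τ/((n:ℝ)+2)) < f x})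
            = {x | c ≤ f x} := by
          ext x
          simp only [mem_iInter, mem_setOf_eq]
          constructor
          · intro h
            by_contra hlt
            push_neg at hlt
            have hxt : f x ≠ ⊤ := ne_top_of_lt hlt
            have h1 : (f x).toReal < τ := by
              rw [← ENNReal.lt_ofReal_iff_toReal_lt hxt]
              exact hlt
            have hδ : 0 < (τ - (f x).toReal)/τ := div_pos (by linarith) hτpos
            obtain ⟨n, hn⟩ := exists_nat_one_div_lt hδ
            have h3 : τ/((n:ℝ)+2) ≤ τ * (1/((n:ℝ)+1)) := by
              rw [mul_one_div]
              exact hdivle _ _ (by positivity) (by linarith)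
            have h4 : τ * (1/((n:ℝ)+1)) < τ * ((τ - (f x).toReal)/τ) :=
              mul_lt_mul_of_pos_left hn hτpos
            have h5 : τ * ((τ - (f x).toReal)/τ) = τ - (f x).toReal := by
              field_simp
            have h6 : f x < ENNReal.ofReal (τ - τ/((n:ℝ)+2)) := by
              rw [ENNReal.lt_ofReal_iff_toReal_lt hxt]
              linarith
            exact absurd (h n) (not_lt.mpr h6.le)
          · intro h n
            refine lt_of_lt_of_le ?_ h
            rw [hcdef]
            refine (ENNReal.ofReal_lt_ofReal_iff hτpos).mpr ?_
            have h7 : 0 < τ/((n:ℝ)+2) := by positivity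
            linarith
        have hbeq : b = ⨅ n : ℕ, W {x | ENNReal.ofReal (τ - τ/((n:ℝ)+2)) < f x} := by
          rw [hbdef, ← hiInter]
          refine Directed.measure_iInter
            (fun n => (measurableSet_lt measurable_const hf).nullMeasurableSet) ?_ ⟨0, ?_⟩
          · intro i j
            refine ⟨max i j, fun x hx => ?_, fun x hx => ?_⟩ <;> rw [mem_setOf_eq] at hx ⊢ <;>
              refine lt_of_le_of_lt (ofReal_le_ofReal ?_) hx
            · have h1 : τ/(((max i j : ℕ):ℝ)+2) ≤ τ/((i:ℝ)+2) :=
                hdivle _ _ (by positivity) (by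
                  have := (Nat.cast_le (α := ℝ)).mpr (le_max_left i j)
                  linarith)
              linarith
            · have h1 : τ/(((max i j : ℕ):ℝ)+2) ≤ τ/((j:ℝ)+2) :=
                hdivle _ _ (by positivity) (by
                  have := (Nat.cast_le (α := ℝ)).mpr (le_max_right i j)
                  linarith)
              linarith
          · refine hgfin _ ?_
            have h8 : τ/(((0:ℕ):ℝ)+2) < τ := by
              rw [div_lt_iff₀ (by norm_num)]
              nlinarith
            linarith
        rw [hbeq]
        refine le_iInf fun n => ?_
        have h7 : 0 < τ/((n:ℝ)+2) := by positivity
        have h8 : τ/((n:ℝ)+2) < τ := by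
          rw [div_lt_iff₀ (by positivity)]
          nlinarith
        have hpos : 0 < τ - τ/((n:ℝ)+2) := by linarith
        have hlt : τ - τ/((n:ℝ)+2) < τ := by linarith
        by_contra hcon
        push_neg at hcon
        have hmem : τ - τ/((n:ℝ)+2) ∈ Aset := ⟨hpos, hcon.le⟩
        exact absurd (csInf_le hbdd hmem) (not_le.mpr hlt)
      have hsub_le : ε' - g τ ≤ a := by
        rw [tsub_le_iff_right]
        calc ε' ≤ b := hbinf
        _ = g τ + a := hbsplit
        _ = a + g τ := add_comm _ _
      set γ' := (ε' - g τ) / a with hγ'def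
      have hγ'a : γ' * a = ε' - g τ := by
        rcases eq_or_ne a 0 with ha | ha
        · have h0 : ε' - g τ = 0 := le_antisymm (ha ▸ hsub_le) zero_le
          simp [hγ'def, ha, h0]
        · exact ENNReal.div_mul_cancel ha hafin
      have hγ'le : γ' ≤ 1 := by
        rcases eq_or_ne a 0 with ha | ha
        · have h0 : ε' - g τ = 0 := le_antisymm (ha ▸ hsub_le) zero_le
          simp [hγ'def, ha, h0]
        · rw [hγ'def, ENNReal.div_le_iff ha hafin, one_mul]
          exact hsub_le
      have hγ'fin : γ' ≠ ⊤ := ne_top_of_le_ne_top one_ne_top hγ'le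
      set γ := γ'.toReal with hγdef
      have hγof : ENNReal.ofReal γ = γ' := ofReal_toReal hγ'fin
      have hγ0 : 0 ≤ γ := toReal_nonneg
      have hγ1 : γ ≤ 1 := by
        rw [hγdef, ← ENNReal.toReal_one]
        exact toReal_mono one_ne_top hγ'le
      have hI : W {x | c < f x} + ENNReal.ofReal γ * W {x | f x = c} ≤ ε' := by
        rw [hγof, ← hadef, ← hgτc, hγ'a]
        exact le_of_eq (add_tsub_cancel_of_le hgτ)
      -- set up the integral computations
      have hIoo : Ioi (0:ℝ) = Ioo 0 τ ∪ Ici τ := (Ioo_union_Ici_eq_Ioi hτpos).symm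
      have hdisj : Disjoint (Ioo (0:ℝ) τ) (Ici τ) :=
        Set.disjoint_left.mpr fun t ht h2 => absurd ht.2 (not_lt.mpr h2)
      have hRsplit : (∫⁻ t in Ioi (0:ℝ), (g t - ε')) = ∫⁻ t in Ioo (0:ℝ) τ, (g t - ε') := by
        rw [hIoo, lintegral_union measurableSet_Ici hdisj]
        have hzero : (∫⁻ t in Ici τ, (g t - ε')) = 0 := by
          rw [setLIntegral_congr_fun measurableSet_Ici
            (fun t (ht : τ ≤ t) => ?_), lintegral_zero]
          rcases eq_or_lt_of_le ht with h' | h'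
          · exact tsub_eq_zero_of_le (h' ▸ hgτ)
          · exact tsub_eq_zero_of_le (hτ_above t h')
        rw [hzero, add_zero]
      set I := ∫⁻ t in Ioo (0:ℝ) τ, g t with hIdef
      have hεle : ∀ t ∈ Ioo (0:ℝ) τ, ε' ≤ g t := fun t ht =>
        le_trans hbinf (hble t ht.2)
      have hIb : ENNReal.ofReal τ * b ≤ I := by
        calc ENNReal.ofReal τ * b = ∫⁻ _ in Ioo (0:ℝ) τ, b := by
              rw [setLIntegral_const, Real.volume_Ioo, sub_zero, mul_comm]
        _ ≤ I := setLIntegral_mono' measurableSet_Ioo fun t ht => hble t ht.2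
      have hIfin : I ≠ ⊤ := by
        have hIle : I ≤ (∫⁻ t in Ioo (0:ℝ) τ, (g t - ε')) + ENNReal.ofReal τ * ε' := by
          calc I ≤ ∫⁻ t in Ioo (0:ℝ) τ, ((g t - ε') + ε') :=
                lintegral_mono fun t => le_tsub_add
          _ = (∫⁻ t in Ioo (0:ℝ) τ, (g t - ε')) + ENNReal.ofReal τ * ε' := by
                rw [lintegral_add_right _ measurable_const, setLIntegral_const,
                  Real.volume_Ioo, sub_zero, mul_comm]
        have h2 : (∫⁻ t in Ioo (0:ℝ) τ, (g t - ε')) ≠ ⊤ := by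
          rw [← hRsplit]; exact hR
        exact ne_top_of_le_ne_top
          (ENNReal.add_ne_top.mpr ⟨h2, ENNReal.mul_ne_top ofReal_ne_top hε't⟩) hIle
      have hC_int : ∫⁻ x in {x | f x < c}, f x ∂W = I - ENNReal.ofReal τ * b := by
        rw [← lintegral_indicator (measurableSet_lt hf measurable_const),
          layer W (hf.indicator (measurableSet_lt hf measurable_const)), hIoo,
          lintegral_union measurableSet_Ici hdisj]
        have hzero : (∫⁻ t in Ici τ,
            W {x | ENNReal.ofReal t < ({x | f x < c}.indicator f) x}) = 0 := by
          rw [setLIntegral_congr_fun measurableSet_Ici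
            (fun t (ht : τ ≤ t) => ?_), lintegral_zero]
          have hempty : {x | ENNReal.ofReal t < ({x | f x < c}.indicator f) x} = ∅ := by
            refine eq_empty_of_forall_notMem fun x hx => ?_
            rw [mem_setOf_eq, Set.indicator_apply] at hx
            by_cases hfc : x ∈ {x | f x < c}
            · rw [if_pos hfc] at hx
              rw [mem_setOf_eq] at hfc
              exact absurd (lt_trans hx hfc) (not_lt.mpr (ofReal_le_ofReal ht))
            · rw [if_neg hfc] at hx
              exact absurd hx (not_lt.mpr zero_le)
          rw [hempty, measure_empty]
        rw [hzero, add_zero]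
        have hptw : ∀ t ∈ Ioo (0:ℝ) τ,
            W {x | ENNReal.ofReal t < ({x | f x < c}.indicator f) x} = g t - b := by
          intro t ht
          have hseteq2 : {x | ENNReal.ofReal t < ({x | f x < c}.indicator f) x}
              = {x | ENNReal.ofReal t < f x} \ {x | c ≤ f x} := by
            ext x
            simp only [mem_setOf_eq, Set.indicator_apply, mem_diff, not_le]
            by_cases hfc : f x < c
            · simp [hfc]
            · simp [hfc, ENNReal.not_lt_zero]
          rw [hseteq2, measure_diff (hsubset_cb t ht.2)
            (show NullMeasurableSet {x | c ≤ f x} W from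
              (measurableSet_le measurable_const hf).nullMeasurableSet) hbfin]
        rw [setLIntegral_congr_fun measurableSet_Ioo hptw,
          lintegral_sub measurable_const (by
            rw [setLIntegral_const, Real.volume_Ioo, sub_zero]
            exact ENNReal.mul_ne_top hbfin ofReal_ne_top)
          ((ae_restrict_iff' measurableSet_Ioo).mpr
            (ae_of_all _ fun t ht => hble t ht.2)),
          setLIntegral_const, Real.volume_Ioo, sub_zero, mul_comm]
      have hRIoo : (∫⁻ t in Ioo (0:ℝ) τ, (g t - ε')) = I - ENNReal.ofReal τ * ε' := by
        rw [lintegral_sub measurable_const (by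
            rw [setLIntegral_const, Real.volume_Ioo, sub_zero]
            exact ENNReal.mul_ne_top hε't ofReal_ne_top)
          ((ae_restrict_iff' measurableSet_Ioo).mpr (ae_of_all _ hεle)),
          setLIntegral_const, Real.volume_Ioo, sub_zero, mul_comm]
      have halg : (1 - γ') * (c * a) + ENNReal.ofReal τ * ε' = ENNReal.ofReal τ * b := by
        have h1 : (1 - γ') * a = a - (ε' - g τ) := by
          rw [ENNReal.sub_mul (fun _ _ => hafin), one_mul, hγ'a]
        have h2 : (a - (ε' - g τ)) + ε' = a + g τ := by
          calc (a - (ε' - g τ)) + ε'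
              = (a - (ε' - g τ)) + ((ε' - g τ) + g τ) := by
                rw [tsub_add_cancel_of_le hgτ]
          _ = ((a - (ε' - g τ)) + (ε' - g τ)) + g τ := by rw [add_assoc]
          _ = a + g τ := by rw [tsub_add_cancel_of_le hsub_le]
        calc (1 - γ') * (c * a) + ENNReal.ofReal τ * ε'
            = ENNReal.ofReal τ * ((1 - γ') * a) + ENNReal.ofReal τ * ε' := by
              rw [hcdef]; ring
        _ = ENNReal.ofReal τ * ((a - (ε' - g τ)) + ε') := by rw [h1, mul_add]
        _ = ENNReal.ofReal τ * b := by rw [h2, hbsplit, add_comm (g τ) a]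
      have htest := betaNP_le_test Q W ε hSm hWS hsingS c γ hγ0 hγ1 hI
      refine le_trans htest ?_
      rw [hRsplit, hRIoo, hC_int, hγof]
      refine ENNReal.le_sub_of_add_le_right (ENNReal.mul_ne_top ofReal_ne_top hε't) ?_
      rw [add_assoc, halg, tsub_add_cancel_of_le hIb]
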